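/- Let G be a simple graph with n vertices and m edges, r ≥ 2, and r⃗ = (n−1,…,n−1) ∈ ℤʳ. The map Φ sending a cell c = (c₁,…,c_r) to the r-tuple (x₁,…,x_r), where x_k is the unique missed vertex if c_k = V(G)∖{x_k} and the unique edge if c_k = {x_k} ∪ (V(G)∖{endpoints of x_k}), is a bijection between the i-cells of S_{r⃗}(G) and the valid i-edge-r-tuples, for every i. -/

import Mathlib

/-- Two elements of `V(G) ∪ E(G)` overlap if their point sets (a vertex, or a
closed edge together with its endpoints) intersect. -/
def overlap {V : Type*} : V ⊕ Sym2 V → V ⊕ Sym2 V → Prop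
  | .inl v, .inl w => v = w
  | .inl v, .inr e => v ∈ e
  | .inr e, .inl v => v ∈ e
  | .inr e, .inr f => ∃ v, v ∈ e ∧ v ∈ f

/-- A cell of the grouped Stirling complex `S_{r⃗}(G)`: an `r`-tuple of sets of
vertices and edges of `G`, with prescribed cardinalities `ℓ i`, covering every
vertex, and pairwise disjoint within each color. -/
def IsCell {V : Type*} [DecidableEq V] (G : SimpleGraph V) {r : ℕ} (ℓ : Fin r → ℕ)
    (c : Fin r → Finset (V ⊕ Sym2 V)) : Prop :=
  (∀ i, (c i).card = ℓ i) ∧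
  (∀ i, ∀ e : Sym2 V, Sum.inr e ∈ c i → e ∈ G.edgeSet) ∧
  (∀ v : V, ∃ i, Sum.inl v ∈ c i) ∧
  (∀ i, ∀ x ∈ c i, ∀ y ∈ c i, x ≠ y → ¬ overlap x y)

/-- The dimension of a cell: the total number of edges appearing among the
components, counted with multiplicity over the colors. -/
def cellDim {V : Type*} {r : ℕ} (c : Fin r → Finset (V ⊕ Sym2 V)) : ℕ :=
  ∑ i, ((c i).filter (fun x => x.isRight)).card

/-- The set corresponding to an entry of an `i`-edge-`r`-tuple: a vertex `v`
expands to `V(G)∖{v}`, an edge `e` to `{e} ∪ (V(G)∖{endpoints of e})`. -/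
def expandEntry {V : Type*} [Fintype V] [DecidableEq V] :
    V ⊕ Sym2 V → Finset (V ⊕ Sym2 V)
  | .inl v => (Finset.univ.erase v).image Sum.inl
  | .inr e => insert (Sum.inr e) ((Finset.univ.filter (fun v => v ∉ e)).image Sum.inl)

open Finset

namespace CellsProof
variable {V : Type*} [Fintype V] [DecidableEq V]

@[simp] lemma inl_mem_expandEntry_inl (v w : V) :
    Sum.inl v ∈ expandEntry (V := V) (Sum.inl w) ↔ v ≠ w := by
  simp [expandEntry]

@[simp] lemma inl_mem_expandEntry_inr (v : V) (e : Sym2 V) :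
    Sum.inl v ∈ expandEntry (V := V) (Sum.inr e) ↔ v ∉ e := by
  simp [expandEntry]

@[simp] lemma inr_mem_expandEntry_inl (e : Sym2 V) (w : V) :
    ¬ Sum.inr e ∈ expandEntry (V := V) (Sum.inl w) := by
  simp [expandEntry]

@[simp] lemma inr_mem_expandEntry_inr (e f : Sym2 V) :
    Sum.inr e ∈ expandEntry (V := V) (Sum.inr f) ↔ e = f := by
  simp [expandEntry, eq_comm]

lemma expandEntry_injective : Function.Injective (expandEntry (V := V)) := by
  intro x y hxy
  match x, y with
  | .inl v, .inl w =>
    have h1 : Sum.inl w ∉ expandEntry (V := V) (Sum.inl w) := by simp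
    rw [← hxy, inl_mem_expandEntry_inl, not_not] at h1
    rw [h1]
  | .inl v, .inr e =>
    have h1 : Sum.inr e ∈ expandEntry (V := V) (Sum.inr e) := by simp
    rw [← hxy] at h1
    exact absurd h1 (inr_mem_expandEntry_inl e v)
  | .inr e, .inl w =>
    have h1 : Sum.inr e ∈ expandEntry (V := V) (Sum.inr e) := by simp
    rw [hxy] at h1
    exact absurd h1 (inr_mem_expandEntry_inl e w)
  | .inr e, .inr f =>
    have h1 : Sum.inr e ∈ expandEntry (V := V) (Sum.inr e) := by simp
    rw [hxy, inr_mem_expandEntry_inr] at h1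
    rw [h1]

lemma card_filter_mem_sym2 {e : Sym2 V} (he : ¬ e.IsDiag) :
    (univ.filter (· ∈ e)).card = 2 := by
  induction e with
  | _ a b =>
    rw [Sym2.isDiag_iff_proj_eq] at he
    have h1 : univ.filter (· ∈ s(a,b)) = {a, b} := by
      ext x; simp [Sym2.mem_iff]
    rw [h1, card_insert_of_notMem (by simpa using he), card_singleton]

lemma card_filter_not_mem_sym2 {n : ℕ} (h : Fintype.card V = n) {e : Sym2 V}
    (he : ¬ e.IsDiag) : (univ.filter (fun v => v ∉ e)).card = n - 2 := by
  have h1 := card_filter_add_card_filter_not (s := (univ : Finset V))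
    (p := (· ∈ e))
  rw [card_filter_mem_sym2 he, card_univ, h] at h1
  omega

lemma card_expandEntry {n : ℕ} (h : Fintype.card V = n) (hn : 2 ≤ n)
    (y : V ⊕ Sym2 V) (hy : ∀ e, y = Sum.inr e → ¬ e.IsDiag) :
    (expandEntry y).card = n - 1 := by
  match y with
  | .inl v =>
    rw [expandEntry, card_image_of_injective _ Sum.inl_injective,
      card_erase_of_mem (mem_univ v), card_univ, h]
  | .inr e =>
    rw [expandEntry, card_insert_of_notMem (by simp),
      card_image_of_injective _ Sum.inl_injective,
      card_filter_not_mem_sym2 h (hy e rfl)]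
    omega

lemma expandEntry_no_overlap (y : V ⊕ Sym2 V) :
    ∀ x ∈ expandEntry y, ∀ z ∈ expandEntry y, x ≠ z → ¬ overlap x z := by
  intro x hx z hz hne hov
  match x, z with
  | .inl a, .inl b => exact hne (by rw [show a = b from hov])
  | .inl a, .inr f =>
    match y with
    | .inl w => exact inr_mem_expandEntry_inl f w hz
    | .inr e =>
      rw [inr_mem_expandEntry_inr] at hz
      rw [inl_mem_expandEntry_inr] at hx
      exact hx (hz ▸ hov)
  | .inr f, .inl a =>
    match y with
    | .inl w => exact inr_mem_expandEntry_inl f w hx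
    | .inr e =>
      rw [inr_mem_expandEntry_inr] at hx
      rw [inl_mem_expandEntry_inr] at hz
      exact hz (hx ▸ hov)
  | .inr f, .inr g =>
    match y with
    | .inl w => exact inr_mem_expandEntry_inl f w hx
    | .inr e =>
      rw [inr_mem_expandEntry_inr] at hx hz
      exact hne (by rw [hx, hz])

lemma filter_isRight_expandEntry (y : V ⊕ Sym2 V) :
    ((expandEntry y).filter (fun x => x.isRight)).card
      = if y.isRight then 1 else 0 := by
  match y with
  | .inl v =>
    have : (expandEntry (V := V) (Sum.inl v)).filter (fun x => x.isRight) = ∅ := by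
      ext x
      match x with
      | .inl a => simp
      | .inr f => simp
    rw [this]; simp
  | .inr e =>
    have : (expandEntry (V := V) (Sum.inr e)).filter (fun x => x.isRight)
        = {Sum.inr e} := by
      ext x
      match x with
      | .inl a => simp
      | .inr f => simp
    rw [this]; simp

variable {V : Type*} [Fintype V] [DecidableEq V]

def pts : V ⊕ Sym2 V → Finset V
  | .inl v => {v}
  | .inr e => Finset.univ.filter (· ∈ e)

lemma mem_pts {u : V} {x : V ⊕ Sym2 V} :
    u ∈ pts x ↔ Sum.elim (fun w => u = w) (fun e => u ∈ e) x := by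
  match x with
  | .inl v => simp [pts]
  | .inr e => simp [pts]

lemma overlap_of_pts {x z : V ⊕ Sym2 V} {u : V} (hx : u ∈ pts x) (hz : u ∈ pts z) :
    overlap x z := by
  match x, z with
  | .inl v, .inl w => simp_all [pts, overlap]
  | .inl v, .inr e => simp_all [pts, overlap]
  | .inr e, .inl v => simp_all [pts, overlap]
  | .inr e, .inr f => simp only [pts, Finset.mem_filter] at hx hz
                      exact ⟨u, hx.2, hz.2⟩

lemma card_pts {x : V ⊕ Sym2 V} (hx : ∀ e, x = Sum.inr e → ¬ e.IsDiag) :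
    (pts x).card = 1 + (if x.isRight then 1 else 0) := by
  match x with
  | .inl v => simp [pts]
  | .inr e => simp [pts, card_filter_mem_sym2 (hx e rfl)]

lemma cell_component_structure {n : ℕ} (hn : 2 ≤ n) (h : Fintype.card V = n)
    (G : SimpleGraph V) (S : Finset (V ⊕ Sym2 V))
    (hcard : S.card = n - 1)
    (hedge : ∀ e : Sym2 V, Sum.inr e ∈ S → e ∈ G.edgeSet)
    (hov : ∀ x ∈ S, ∀ y ∈ S, x ≠ y → ¬ overlap x y) :
    ∃ y, S = expandEntry y := by
  classical
  have hdiag : ∀ x ∈ S, ∀ e, x = Sum.inr e → ¬ e.IsDiag := by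
    intro x hx e hxe
    exact G.not_isDiag_of_mem_edgeSet (hedge e (hxe ▸ hx))
  set b := (S.filter (fun x => x.isRight)).card with hb
  have hsum : ∑ x ∈ S, (pts x).card = S.card + b := by
    rw [Finset.sum_congr rfl (fun x hx => card_pts (hdiag x hx)),
      Finset.sum_add_distrib, Finset.sum_const, smul_eq_mul, mul_one, hb,
      Finset.card_filter]
  have hbi : (S.biUnion pts).card = ∑ x ∈ S, (pts x).card := by
    apply Finset.card_biUnion
    intro x hx z hz hne
    rw [Function.onFun, Finset.disjoint_left]
    intro u hux huz
    exact hov x hx z hz hne (overlap_of_pts hux huz)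
  have hle : (S.biUnion pts).card ≤ n := by
    rw [← h, ← Finset.card_univ]
    exact Finset.card_le_card (Finset.subset_univ _)
  have hb1 : b ≤ 1 := by omega
  interval_cases b
  · -- no edges: all entries are vertices
    have hall : ∀ x ∈ S, ∃ v, x = Sum.inl v := by
      intro x hx
      match x with
      | .inl v => exact ⟨v, rfl⟩
      | .inr e =>
        have hmem : Sum.inr e ∈ S.filter (fun x => x.isRight) := by simp [hx]
        have hfe : S.filter (fun x => (x.isRight : Prop)) = ∅ :=
          Finset.card_eq_zero.mp hb.symm
        rw [hfe] at hmem
        exact absurd hmem (Finset.notMem_empty _)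
    set A := Finset.univ.filter (fun v => Sum.inl v ∈ S) with hA
    have hSA : S = A.image Sum.inl := by
      ext x
      constructor
      · intro hx
        obtain ⟨v, rfl⟩ := hall x hx
        simp [hA, hx]
      · intro hx
        obtain ⟨v, hv, rfl⟩ := Finset.mem_image.mp hx
        simpa [hA] using hv
    have hcardA : A.card = n - 1 := by
      rw [← hcard, hSA, Finset.card_image_of_injective _ Sum.inl_injective]
    have hcompl : Aᶜ.card = 1 := by
      rw [Finset.card_compl, hcardA, h]; omega
    obtain ⟨v, hv⟩ := Finset.card_eq_one.mp hcompl
    refine ⟨Sum.inl v, ?_⟩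
    rw [hSA]
    ext x
    match x with
    | .inl w =>
      rw [inl_mem_expandEntry_inl]
      simp only [Finset.mem_image, Sum.inl.injEq]
      constructor
      · rintro ⟨u, hu, rfl⟩
        intro hwv
        have : u ∈ Aᶜ := by rw [hv, hwv]; simp
        exact (Finset.mem_compl.mp this) hu
      · intro hwv
        refine ⟨w, ?_, rfl⟩
        by_contra hwA
        have : w ∈ Aᶜ := Finset.mem_compl.mpr hwA
        rw [hv, Finset.mem_singleton] at this
        exact hwv this
    | .inr f =>
      simp
  · -- exactly one edge
    obtain ⟨x0, hx0⟩ := Finset.card_eq_one.mp hb.symm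
    have hx0S : x0 ∈ S := Finset.mem_of_mem_filter x0 (hx0 ▸ Finset.mem_singleton_self x0)
    have hx0R : x0.isRight := by
      have := hx0 ▸ Finset.mem_singleton_self x0
      exact (Finset.mem_filter.mp this).2
    obtain ⟨e, rfl⟩ := Sum.isRight_iff.mp hx0R
    have hediag : ¬ e.IsDiag := G.not_isDiag_of_mem_edgeSet (hedge e hx0S)
    set A := Finset.univ.filter (fun v => Sum.inl v ∈ S) with hA
    have hAsub : A ⊆ Finset.univ.filter (fun v => v ∉ e) := by
      intro v hv
      rw [hA, Finset.mem_filter] at hv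
      rw [Finset.mem_filter]
      refine ⟨Finset.mem_univ v, fun hve => ?_⟩
      exact hov _ hv.2 _ hx0S (by simp) hve
    have hAimg : A.image Sum.inl = S.filter (fun x => ¬ x.isRight) := by
      ext x
      match x with
      | .inl w => simp [hA]
      | .inr f => simp
    have hcardA : A.card = n - 2 := by
      have h2 := Finset.card_filter_add_card_filter_not
        (s := S) (p := fun x => (x.isRight : Prop))
      rw [← hb, hcard] at h2
      have h3 : A.card = (S.filter (fun x => ¬ x.isRight)).card := by
        rw [← hAimg, Finset.card_image_of_injective _ Sum.inl_injective]
      omega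
    have hAeq : A = Finset.univ.filter (fun v => v ∉ e) :=
      Finset.eq_of_subset_of_card_le hAsub
        (by rw [hcardA, card_filter_not_mem_sym2 h hediag])
    refine ⟨Sum.inr e, ?_⟩
    ext x
    match x with
    | .inl w =>
      rw [inl_mem_expandEntry_inr]
      constructor
      · intro hw
        have : w ∈ A := by simp [hA, hw]
        rw [hAeq, Finset.mem_filter] at this
        exact this.2
      · intro hw
        have : w ∈ A := by rw [hAeq]; simp [hw]
        simpa [hA] using this
    | .inr f =>
      rw [inr_mem_expandEntry_inr]
      constructor
      · intro hf
        have : Sum.inr f ∈ S.filter (fun x => x.isRight) := by simp [hf]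
        rw [hx0, Finset.mem_singleton] at this
        exact Sum.inr_injective this
      · rintro rfl
        exact hx0S

end CellsProof

open CellsProof

/-- For `r⃗ = (n−1,…,n−1) ∈ ℤʳ`, the map `Φ` sending a cell `c` to the tuple
of missed vertices / colored edges is a bijection between the `i`-cells of
`S_{r⃗}(G)` and the valid `i`-edge-`r`-tuples. -/
theorem cells_equiv_valid_tuples {V : Type*} [Fintype V] [DecidableEq V]
    (G : SimpleGraph V) [DecidableRel G.Adj] (n r i : ℕ) (hn : 2 ≤ n)
    (h : Fintype.card V = n) (hr : 2 ≤ r) :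
    ∃ Φ : {c : Fin r → Finset (V ⊕ Sym2 V) //
            IsCell G (fun _ => n - 1) c ∧ cellDim c = i} →
          {x : Fin r → V ⊕ Sym2 V //
            (∀ k, ∀ e : Sym2 V, x k = Sum.inr e → e ∈ G.edgeSet) ∧
            (Finset.univ.filter (fun k => ((x k).isRight : Prop))).card = i ∧
            ¬ ∃ v : V, ∀ k, Sum.elim (fun w => w = v) (fun e => v ∈ e) (x k)},
      Function.Bijective Φ ∧ ∀ c k, (c : _).1 k = expandEntry ((Φ c).1 k) := by
  classical
  have struct : ∀ (c : {c : Fin r → Finset (V ⊕ Sym2 V) //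
      IsCell G (fun _ => n - 1) c ∧ cellDim c = i}) (k : Fin r),
      ∃ y, c.1 k = expandEntry y := fun c k =>
    cell_component_structure hn h G (c.1 k) (c.2.1.1 k)
      (fun e he => c.2.1.2.1 k e he) (c.2.1.2.2.2 k)
  choose y hy using struct
  have hedges : ∀ c k, ∀ e : Sym2 V, y c k = Sum.inr e → e ∈ G.edgeSet := by
    intro c k e he
    apply c.2.1.2.1 k e
    rw [hy c k, he]
    simp
  have hdim : ∀ c, (Finset.univ.filter
      (fun k => (((y c k).isRight : Bool) : Prop))).card = i := by
    intro c
    rw [Finset.card_filter, ← c.2.2]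
    unfold cellDim
    refine Finset.sum_congr rfl fun k _ => ?_
    rw [hy c k, filter_isRight_expandEntry]
  have hvalid : ∀ c, ¬ ∃ v : V, ∀ k,
      Sum.elim (fun w => w = v) (fun e => v ∈ e) (y c k) := by
    rintro c ⟨v, hv⟩
    obtain ⟨k, hk⟩ := c.2.1.2.2.1 v
    rw [hy c k] at hk
    have := hv k
    match hyk : y c k with
    | .inl w =>
      rw [hyk] at hk this
      rw [inl_mem_expandEntry_inl] at hk
      exact hk (by simpa using this.symm)
    | .inr e =>
      rw [hyk] at hk this
      rw [inl_mem_expandEntry_inr] at hk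
      exact hk (by simpa using this)
  refine ⟨fun c => ⟨y c, hedges c, hdim c, hvalid c⟩, ⟨?_, ?_⟩, fun c k => hy c k⟩
  · -- injective
    intro c c' hcc'
    have hyy : y c = y c' := congrArg Subtype.val hcc'
    apply Subtype.ext
    funext k
    rw [hy c k, hy c' k, hyy]
  · -- surjective
    rintro ⟨x, hx1, hx2, hx3⟩
    have hnd : ∀ k, ∀ e, x k = Sum.inr e → ¬ e.IsDiag := fun k e he =>
      G.not_isDiag_of_mem_edgeSet (hx1 k e he)
    have hc : IsCell G (fun _ => n - 1) (fun k => expandEntry (x k)) ∧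
        cellDim (fun k => expandEntry (x k)) = i := by
      refine ⟨⟨fun k => card_expandEntry h hn (x k) (hnd k), ?_, ?_, ?_⟩, ?_⟩
      · intro k e he
        change Sum.inr e ∈ expandEntry (x k) at he
        match hxk : x k with
        | .inl w =>
          rw [hxk] at he
          exact absurd he (inr_mem_expandEntry_inl e w)
        | .inr f =>
          rw [hxk, inr_mem_expandEntry_inr] at he
          rw [he]; exact hx1 k f hxk
      · intro v
        push_neg at hx3
        obtain ⟨k, hk⟩ := hx3 v
        refine ⟨k, ?_⟩
        change Sum.inl v ∈ expandEntry (x k)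
        match hxk : x k with
        | .inl w =>
          rw [hxk] at hk
          rw [inl_mem_expandEntry_inl]
          intro hvw
          exact hk (by simp [hvw])
        | .inr e =>
          rw [hxk] at hk
          rw [inl_mem_expandEntry_inr]
          simpa using hk
      · intro k
        exact expandEntry_no_overlap (x k)
      · unfold cellDim
        rw [← hx2, Finset.card_filter]
        exact Finset.sum_congr rfl fun k _ => filter_isRight_expandEntry (x k)
    refine ⟨⟨fun k => expandEntry (x k), hc⟩, ?_⟩
    apply Subtype.ext
    funext k
    apply expandEntry_injective
    rw [← hy ⟨fun k => expandEntry (x k), hc⟩ k]
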